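/- arXiv:2106.00177 — 3 statements merged into one kernel-verified Lean document; each statement's English description precedes it below -/
import Mathlib

section
/- Let X be a measurable space, ρ a probability measure on X, and R₁ : X ≃ [0,1]^d a measurable equivalence whose pushforward of ρ equals the uniform distribution μ on [0,1]^d. Then a measurable map R₂ : X → [0,1]^d satisfies Measure.map R₂ ρ = μ if and only if there exists a measurable map U : [0,1]^d → [0,1]^d with Measure.map U μ = μ such that R₂ = U ∘ R₁. -/
open MeasureTheory

/-- Any two Rosenblatt transformations for `ρ` are related by a uniform map:
given a measurable-equivalence Rosenblatt transformation `R₁` for `ρ`, a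
measurable map `R₂ : X → [0,1]^d` pushes `ρ` forward to the uniform
distribution iff `R₂ = U ∘ R₁` for some measurable uniform map `U`. -/
theorem rosenblatt_related_by_uniform_map {d : ℕ} {X : Type*} [MeasurableSpace X]
    (ρ : Measure X) [IsProbabilityMeasure ρ]
    (R₁ : X ≃ᵐ (Fin d → Set.Icc (0:ℝ) 1))
    (hR₁ : Measure.map R₁ ρ = (volume : Measure (Fin d → Set.Icc (0:ℝ) 1)))
    (R₂ : X → (Fin d → Set.Icc (0:ℝ) 1)) (hR₂ : Measurable R₂) :
    Measure.map R₂ ρ = (volume : Measure (Fin d → Set.Icc (0:ℝ) 1)) ↔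
      ∃ U : (Fin d → Set.Icc (0:ℝ) 1) → (Fin d → Set.Icc (0:ℝ) 1),
        Measurable U ∧
        Measure.map U (volume : Measure (Fin d → Set.Icc (0:ℝ) 1)) = volume ∧
        R₂ = U ∘ R₁ := by
  constructor
  · intro h
    refine ⟨R₂ ∘ R₁.symm, hR₂.comp R₁.symm.measurable, ?_, ?_⟩
    · conv_lhs => rw [← hR₁]
      rw [Measure.map_map (hR₂.comp R₁.symm.measurable) R₁.measurable]
      have : (R₂ ∘ ⇑R₁.symm) ∘ ⇑R₁ = R₂ := by
        ext x; simp
      rw [this, h]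
    · ext x; simp
  · rintro ⟨U, hU, hUvol, rfl⟩
    rw [← Measure.map_map hU R₁.measurable, hR₁, hUvol]
end

section
/- For every natural number n ≥ 1 and every x ∈ [0,1], the n-th iterate of the logistic map M_log(x) = 4x(1-x) is given by the closed form M_log^[n](x) = sin²(2ⁿ · arcsin(√x)). -/
open Real

lemma logistic_aux (n : ℕ) :
    ∀ x ∈ Set.Icc (0:ℝ) 1,
      (fun x : ℝ => 4 * x * (1 - x))^[n] x =
        sin ((2:ℝ) ^ n * arcsin (Real.sqrt x)) ^ 2 := by
  induction n with
  | zero =>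
    intro x hx
    simp only [Function.iterate_zero, id, pow_zero, one_mul]
    rw [Real.sin_arcsin (by linarith [Real.sqrt_nonneg x]) (Real.sqrt_le_one.mpr hx.2),
      Real.sq_sqrt hx.1]
  | succ n ih =>
    intro x hx
    rw [Function.iterate_succ_apply', ih x hx]
    set a := (2:ℝ) ^ n * arcsin (Real.sqrt x)
    have h1 : Real.sin a ^ 2 ≤ 1 := sin_sq_le_one a
    have h2 : (1 : ℝ) - Real.sin a ^ 2 = Real.cos a ^ 2 := by
      rw [← Real.sin_sq_add_cos_sq a]; ring
    show 4 * Real.sin a ^ 2 * (1 - Real.sin a ^ 2) = _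
    rw [h2]
    have : 4 * Real.sin a ^ 2 * Real.cos a ^ 2 = (2 * Real.sin a * Real.cos a) ^ 2 := by
      ring
    rw [this, ← Real.sin_two_mul]
    congr 1
    rw [pow_succ]
    rw [show a = (2:ℝ) ^ n * arcsin (Real.sqrt x) from rfl]
    ring

/-- Closed form for the iterates of the logistic map: for every `n ≥ 1` and
every `x ∈ [0,1]`, the `n`-th iterate of `M_log x = 4x(1-x)` is
`sin²(2ⁿ arcsin √x)`. -/
theorem logistic_map_iterate_closed_form (n : ℕ) (hn : 1 ≤ n) :
    ∀ x ∈ Set.Icc (0:ℝ) 1,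
      (fun x : ℝ => 4 * x * (1 - x))^[n] x =
        sin ((2:ℝ) ^ n * arcsin (Real.sqrt x)) ^ 2 := by
  exact logistic_aux n
end

section
/- The symmetric triangular distribution on [0,1], i.e. the measure with density ρ_tri(x) = 2 - 4|x - 1/2| with respect to Lebesgue measure on [0,1], is invariant under the map M_tri : [0,1] → [0,1] defined piecewise by M_tri(x) = √2·x for 0 ≤ x ≤ 1/√8, M_tri(x) = 1 - √(1/2 - 2x²) for 1/√8 ≤ x ≤ 1/2, M_tri(x) = 1 - √(1/2 - 2(1-x)²) for 1/2 ≤ x ≤ 1 - 1/√8, and M_tri(x) = √2·(1 - x) for 1 - 1/√8 ≤ x ≤ 1: the pushforward of the triangular distribution under M_tri equals the triangular distribution. -/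
open MeasureTheory


noncomputable def Mtri : ℝ → ℝ := fun x : ℝ =>
  if x ≤ 1 / Real.sqrt 8 then Real.sqrt 2 * x
  else if x ≤ 1/2 then 1 - Real.sqrt (1/2 - 2 * x ^ 2)
  else if x ≤ 1 - 1 / Real.sqrt 8 then 1 - Real.sqrt (1/2 - 2 * (1 - x) ^ 2)
  else Real.sqrt 2 * (1 - x)

lemma sqrt2_sq : Real.sqrt 2 ^ 2 = 2 := Real.sq_sqrt (by norm_num)
lemma sqrt2_pos : (0:ℝ) < Real.sqrt 2 := Real.sqrt_pos.2 (by norm_num)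
lemma sqrt2_lt2 : Real.sqrt 2 < 2 := by nlinarith [sqrt2_sq, sqrt2_pos]

lemma inv_sqrt8 : 1 / Real.sqrt 8 = Real.sqrt 2 / 4 := by
  rw [show (8:ℝ) = 2^2 * 2 by norm_num, Real.sqrt_mul (by positivity),
    Real.sqrt_sq (by norm_num : (0:ℝ) ≤ 2)]
  have h2 := sqrt2_pos
  have hs := sqrt2_sq
  field_simp
  nlinarith


lemma Mtri_mble : Measurable Mtri := by
  apply Measurable.ite measurableSet_Iic (by fun_prop)
  apply Measurable.ite measurableSet_Iic (by fun_prop)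
  exact Measurable.ite measurableSet_Iic (by fun_prop) (by fun_prop)

lemma Mtri_nonneg {x : ℝ} (hx0 : 0 ≤ x) (hx1 : x ≤ 1) : 0 ≤ Mtri x := by
  have hs2 := sqrt2_pos
  unfold Mtri
  split_ifs with h1 h2 h3
  · exact mul_nonneg hs2.le hx0
  · have := Real.sqrt_le_one.2 (show (1:ℝ)/2 - 2*x^2 ≤ 1 by nlinarith)
    linarith
  · have := Real.sqrt_le_one.2 (show (1:ℝ)/2 - 2*(1-x)^2 ≤ 1 by nlinarith)
    linarith
  · exact mul_nonneg hs2.le (by linarith)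

lemma Mtri_le_one {x : ℝ} (hx0 : 0 ≤ x) (hx1 : x ≤ 1) : Mtri x ≤ 1 := by
  have hs2 := sqrt2_pos
  have hsq := sqrt2_sq
  unfold Mtri
  rw [inv_sqrt8]
  split_ifs with h1 h2 h3
  · nlinarith
  · have := Real.sqrt_nonneg (1/2 - 2*x^2); linarith
  · have := Real.sqrt_nonneg (1/2 - 2*(1-x)^2); linarith
  · push_neg at h3; nlinarith

set_option maxHeartbeats 1000000 in
lemma set_low (a : ℝ) (ha0 : 0 ≤ a) (ha1 : a ≤ 1/2) :
    Mtri ⁻¹' Set.Iic a ∩ Set.Icc 0 1 =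
      Set.Icc 0 (a / Real.sqrt 2) ∪ Set.Icc (1 - a / Real.sqrt 2) 1 := by
  have hs2 := sqrt2_pos
  have hsq := sqrt2_sq
  have hlt2 := sqrt2_lt2
  have hg : Real.sqrt 2 * (a / Real.sqrt 2) = a := by field_simp
  set s := Real.sqrt 2 with hs
  set g := a / s with hgdef
  have hg0 : 0 ≤ g := div_nonneg ha0 hs2.le
  have hgb : g ≤ s/4 := by nlinarith
  have hgsq : g^2 = a^2/2 := by rw [hgdef, div_pow, hsq]
  ext x
  simp only [Mtri, inv_sqrt8, ← hs, Set.mem_inter_iff, Set.mem_preimage, Set.mem_Iic,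
    Set.mem_Icc, Set.mem_union]
  constructor
  · rintro ⟨hMx, hx0, hx1⟩
    split_ifs at hMx with h1 h2 h3
    · left; exact ⟨hx0, by nlinarith⟩
    · push_neg at h1
      have harg0 : (0:ℝ) ≤ 1/2 - 2*x^2 := by nlinarith
      have h1a : (1:ℝ) - a ≤ Real.sqrt (1/2 - 2*x^2) := by linarith
      have h2a := (Real.le_sqrt (by linarith) harg0).1 h1a
      left; exact ⟨hx0, by nlinarith⟩
    · push_neg at h1 h2
      have harg0 : (0:ℝ) ≤ 1/2 - 2*(1-x)^2 := by nlinarith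
      have h1a : (1:ℝ) - a ≤ Real.sqrt (1/2 - 2*(1-x)^2) := by linarith
      have h2a := (Real.le_sqrt (by linarith) harg0).1 h1a
      right; refine ⟨by nlinarith, hx1⟩
    · push_neg at h3
      right; refine ⟨by nlinarith, hx1⟩
  · rintro (⟨hx0, hxg⟩ | ⟨hxg, hx1⟩)
    · have hx1 : x ≤ 1 := by linarith
      refine ⟨?_, hx0, hx1⟩
      split_ifs with h1 h2 h3
      · nlinarith
      · push_neg at h1; linarith
      · push_neg at h1 h2; linarith
      · push_neg at h1 h2 h3; linarith
    · have hx0 : 0 ≤ x := by linarith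
      refine ⟨?_, hx0, hx1⟩
      split_ifs with h1 h2 h3
      · linarith
      · push_neg at h1; linarith
      · -- 1/2 < x ≤ 1 - s/4 and 1 - g ≤ x : forces equality case
        push_neg at h1 h2
        have hxe : 1 - x = s/4 := by linarith
        have harg : 1/2 - 2*(1-x)^2 = 1/4 := by rw [hxe]; linear_combination (-1/8) * hsq
        rw [harg, show (1:ℝ)/4 = (1/2)^2 by norm_num,
          Real.sqrt_sq (by norm_num : (0:ℝ) ≤ 1/2)]
        have hge : g = s/4 := le_antisymm hgb (by linarith)
        have ha2 : a = 1/2 := by rw [← hg, hge]; linear_combination hsq/4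
        linarith
      · push_neg at h3
        nlinarith

set_option maxHeartbeats 1000000 in
lemma set_high (a : ℝ) (ha0 : 1/2 ≤ a) (ha1 : a ≤ 1) :
    Mtri ⁻¹' Set.Iic a ∩ Set.Icc 0 1 =
      Set.Icc 0 (Real.sqrt ((1/2 - (1-a)^2)/2)) ∪
        Set.Icc (1 - Real.sqrt ((1/2 - (1-a)^2)/2)) 1 := by
  have hs2 := sqrt2_pos
  have hsq := sqrt2_sq
  have hlt2 := sqrt2_lt2
  have harga : (0:ℝ) ≤ (1/2 - (1-a)^2)/2 := by nlinarith
  set s := Real.sqrt 2 with hs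
  set g := Real.sqrt ((1/2 - (1-a)^2)/2) with hgdef
  have hg0 : 0 ≤ g := Real.sqrt_nonneg _
  have hgsq : g^2 = (1/2 - (1-a)^2)/2 := Real.sq_sqrt harga
  have hgb : s/4 ≤ g := le_of_sq_le_sq (by nlinarith) hg0
  have hg12 : g ≤ 1/2 := le_of_sq_le_sq (by nlinarith) (by norm_num)
  ext x
  simp only [Mtri, inv_sqrt8, ← hs, Set.mem_inter_iff, Set.mem_preimage, Set.mem_Iic,
    Set.mem_Icc, Set.mem_union]
  constructor
  · rintro ⟨hMx, hx0, hx1⟩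
    split_ifs at hMx with h1 h2 h3
    · left; exact ⟨hx0, by linarith⟩
    · push_neg at h1
      have harg0 : (0:ℝ) ≤ 1/2 - 2*x^2 := by nlinarith
      have h1a : (1:ℝ) - a ≤ Real.sqrt (1/2 - 2*x^2) := by linarith
      have h2a := (Real.le_sqrt (by linarith) harg0).1 h1a
      left
      exact ⟨hx0, le_of_sq_le_sq (by nlinarith) hg0⟩
    · push_neg at h1 h2
      have harg0 : (0:ℝ) ≤ 1/2 - 2*(1-x)^2 := by nlinarith
      have h1a : (1:ℝ) - a ≤ Real.sqrt (1/2 - 2*(1-x)^2) := by linarith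
      have h2a := (Real.le_sqrt (by linarith) harg0).1 h1a
      right
      have : 1 - x ≤ g := le_of_sq_le_sq (by nlinarith) hg0
      exact ⟨by linarith, hx1⟩
    · push_neg at h3
      right; exact ⟨by linarith, hx1⟩
  · rintro (⟨hx0, hxg⟩ | ⟨hxg, hx1⟩)
    · have hx1 : x ≤ 1 := by linarith
      refine ⟨?_, hx0, hx1⟩
      split_ifs with h1 h2 h3
      · nlinarith
      · push_neg at h1
        have hle : (1-a)^2 ≤ 1/2 - 2*x^2 := by nlinarith
        have := (Real.le_sqrt (by linarith) (by nlinarith)).2 hle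
        linarith
      · -- 1/2 < x ≤ 1 - s/4 but x ≤ g ≤ 1/2 : impossible
        push_neg at h1 h2
        linarith
      · push_neg at h1 h2 h3
        linarith
    · have hx0 : 0 ≤ x := by linarith
      refine ⟨?_, hx0, hx1⟩
      split_ifs with h1 h2 h3
      · nlinarith
      · push_neg at h1
        have hxg2 : x ≤ g := by linarith
        have hle : (1-a)^2 ≤ 1/2 - 2*x^2 := by nlinarith
        have := (Real.le_sqrt (by linarith) (by nlinarith)).2 hle
        linarith
      · push_neg at h1 h2
        have hxg2 : 1 - x ≤ g := by linarith
        have hle : (1-a)^2 ≤ 1/2 - 2*(1-x)^2 := by nlinarith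
        have := (Real.le_sqrt (by linarith) (by nlinarith)).2 hle
        linarith
      · push_neg at h1 h2 h3
        nlinarith

lemma lint_lin (u v c d : ℝ) (huv : u ≤ v)
    (heq : ∀ x ∈ Set.Ioc u v, 2 - 4 * |x - 1/2| = c + d * x)
    (hnn : ∀ x ∈ Set.Ioc u v, 0 ≤ c + d * x) :
    ∫⁻ x in Set.Ioc u v, ENNReal.ofReal (2 - 4 * |x - 1/2|) =
      ENNReal.ofReal (c * (v - u) + d * (v^2 - u^2) / 2) := by
  rw [setLIntegral_congr_fun measurableSet_Ioc
    (fun x hx => by rw [heq x hx])]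
  rw [← ofReal_integral_eq_lintegral_ofReal]
  · rw [← intervalIntegral.integral_of_le huv]
    congr 1
    rw [intervalIntegral.integral_add intervalIntegrable_const
      (by apply Continuous.intervalIntegrable; fun_prop)]
    rw [intervalIntegral.integral_const, intervalIntegral.integral_const_mul, integral_id]
    simp
    ring
  · apply Continuous.integrableOn_Ioc
    fun_prop
  · exact (ae_restrict_iff' measurableSet_Ioc).2 (Filter.Eventually.of_forall hnn)

lemma lint_left (u v : ℝ) (h0 : 0 ≤ u) (huv : u ≤ v) (hv : v ≤ 1/2) :
    ∫⁻ x in Set.Ioc u v, ENNReal.ofReal (2 - 4 * |x - 1/2|) =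
      ENNReal.ofReal (2*v^2 - 2*u^2) := by
  rw [lint_lin u v 0 4 huv
    (fun x hx => by rw [abs_of_nonpos (by cases hx with | intro h1 h2 => linarith)]; ring)
    (fun x hx => by cases hx with | intro h1 h2 => linarith)]
  congr 1; ring

lemma lint_right (u v : ℝ) (h0 : 1/2 ≤ u) (huv : u ≤ v) (hv : v ≤ 1) :
    ∫⁻ x in Set.Ioc u v, ENNReal.ofReal (2 - 4 * |x - 1/2|) =
      ENNReal.ofReal (4*(v-u) - 2*(v^2 - u^2)) := by
  rw [lint_lin u v 4 (-4) huv
    (fun x hx => by rw [abs_of_nonneg (by cases hx with | intro h1 h2 => linarith)]; ring)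
    (fun x hx => by cases hx with | intro h1 h2 => linarith)]
  congr 1; ring



set_option maxHeartbeats 1000000 in
/-- The symmetric triangular distribution on `[0,1]`, with density
`ρ_tri x = 2 - 4|x - 1/2|` with respect to Lebesgue measure on `[0,1]`, is
invariant under the piecewise map `M_tri` given by `√2 x` on `[0, 1/√8]`,
`1 - √(1/2 - 2x²)` on `[1/√8, 1/2]`, `1 - √(1/2 - 2(1-x)²)` on
`[1/2, 1 - 1/√8]`, and `√2 (1 - x)` on `[1 - 1/√8, 1]`. -/
theorem triangular_distribution_invariant_map :
    Measure.map
        (fun x : ℝ =>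
          if x ≤ 1 / Real.sqrt 8 then Real.sqrt 2 * x
          else if x ≤ 1/2 then 1 - Real.sqrt (1/2 - 2 * x ^ 2)
          else if x ≤ 1 - 1 / Real.sqrt 8 then 1 - Real.sqrt (1/2 - 2 * (1 - x) ^ 2)
          else Real.sqrt 2 * (1 - x))
        ((volume.restrict (Set.Icc (0:ℝ) 1)).withDensity
          fun x => ENNReal.ofReal (2 - 4 * |x - 1/2|)) =
      (volume.restrict (Set.Icc (0:ℝ) 1)).withDensity
        fun x => ENNReal.ofReal (2 - 4 * |x - 1/2|) := by
  set μ : Measure ℝ := (volume.restrict (Set.Icc (0:ℝ) 1)).withDensity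
    (fun x => ENNReal.ofReal (2 - 4 * |x - 1/2|)) with hμ
  show Measure.map Mtri μ = μ
  have hM := Mtri_mble
  have key : ∀ s : Set ℝ, MeasurableSet s →
      μ s = ∫⁻ x in s ∩ Set.Icc 0 1, ENNReal.ofReal (2 - 4 * |x - 1/2|) := by
    intro s hs
    rw [hμ, withDensity_apply _ hs, Measure.restrict_restrict hs]
  haveI hfin : IsFiniteMeasure μ := by
    constructor
    rw [key _ MeasurableSet.univ, Set.univ_inter]
    calc ∫⁻ x in Set.Icc (0:ℝ) 1, ENNReal.ofReal (2 - 4*|x-1/2|)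
        ≤ ∫⁻ _x in Set.Icc (0:ℝ) 1, ENNReal.ofReal 2 := by
          exact lintegral_mono fun x =>
            ENNReal.ofReal_le_ofReal (by nlinarith [abs_nonneg (x - 1/2)])
      _ = ENNReal.ofReal 2 * volume (Set.Icc (0:ℝ) 1) := setLIntegral_const _ _
      _ < ⊤ := by
          rw [Real.volume_Icc]
          exact ENNReal.mul_lt_top ENNReal.ofReal_lt_top ENNReal.ofReal_lt_top
  haveI : IsFiniteMeasure (μ.map Mtri) :=
    ⟨by rw [Measure.map_apply hM MeasurableSet.univ, Set.preimage_univ]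
        exact measure_lt_top μ _⟩
  apply Measure.ext_of_Iic
  intro a
  rw [Measure.map_apply hM measurableSet_Iic, key _ (hM measurableSet_Iic),
    key _ measurableSet_Iic]
  rcases lt_or_ge a 0 with ha | ha0
  · have h1 : Mtri ⁻¹' Set.Iic a ∩ Set.Icc 0 1 = (∅ : Set ℝ) := by
      apply Set.eq_empty_iff_forall_notMem.2
      rintro x ⟨(hMx : Mtri x ≤ a), hx0, hx1⟩
      linarith [Mtri_nonneg hx0 hx1]
    have h2 : Set.Iic a ∩ Set.Icc (0:ℝ) 1 = ∅ := by
      apply Set.eq_empty_iff_forall_notMem.2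
      rintro x ⟨(h : x ≤ a), h0, _⟩
      linarith
    rw [h1, h2]
  rcases le_or_gt a 1 with ha1 | ha
  swap
  · have h1 : Mtri ⁻¹' Set.Iic a ∩ Set.Icc 0 1 = Set.Icc 0 1 := by
      ext x
      simp only [Set.mem_inter_iff, Set.mem_preimage, Set.mem_Iic, Set.mem_Icc]
      exact ⟨fun h => h.2, fun hx => ⟨le_trans (Mtri_le_one hx.1 hx.2) ha.le, hx⟩⟩
    have h2 : Set.Iic a ∩ Set.Icc (0:ℝ) 1 = Set.Icc 0 1 := by
      ext x
      simp only [Set.mem_inter_iff, Set.mem_Iic, Set.mem_Icc]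
      exact ⟨fun h => h.2, fun hx => ⟨by linarith [hx.2], hx⟩⟩
    rw [h1, h2]
  have hIic : Set.Iic a ∩ Set.Icc (0:ℝ) 1 = Set.Icc 0 a := by
    ext x
    simp only [Set.mem_inter_iff, Set.mem_Iic, Set.mem_Icc]
    exact ⟨fun h => ⟨h.2.1, h.1⟩, fun h => ⟨h.2, h.1, le_trans h.2 ha1⟩⟩
  rw [hIic]
  have hs2 := sqrt2_pos
  have hsq := sqrt2_sq
  rcases le_or_gt a (1/2) with hhalf | hhalf
  · -- low case
    obtain ⟨g, hgdef⟩ : ∃ g : ℝ, g = a / Real.sqrt 2 := ⟨_, rfl⟩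
    have hg0 : 0 ≤ g := hgdef ▸ div_nonneg ha0 hs2.le
    have hgsq : g^2 = a^2/2 := by rw [hgdef, div_pow, hsq]
    have hg12 : g ≤ 1/2 := by nlinarith
    have hdisj : Disjoint (Set.Ioc (0:ℝ) g) (Set.Ioc (1-g) 1) := by
      apply Set.disjoint_left.2
      rintro x ⟨_, hxg⟩ ⟨hx1, _⟩
      linarith
    rw [set_low a ha0 hhalf, ← hgdef]
    rw [setLIntegral_congr (Filter.EventuallyEq.union
        (Ioc_ae_eq_Icc (a := (0:ℝ)) (b := g)) (Ioc_ae_eq_Icc (a := 1-g) (b := 1))).symm,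
      setLIntegral_congr (Ioc_ae_eq_Icc (a := (0:ℝ)) (b := a)).symm]
    rw [lintegral_union measurableSet_Ioc hdisj]
    rw [lint_left 0 g le_rfl hg0 hg12,
      lint_right (1-g) 1 (by linarith) (by linarith) le_rfl,
      lint_left 0 a le_rfl ha0 hhalf]
    rw [← ENNReal.ofReal_add (by nlinarith) (by nlinarith)]
    congr 1
    linear_combination 4 * hgsq
  · -- high case
    have harga : (0:ℝ) ≤ (1/2 - (1-a)^2)/2 := by nlinarith
    obtain ⟨g, hgdef⟩ : ∃ g : ℝ, g = Real.sqrt ((1/2 - (1-a)^2)/2) := ⟨_, rfl⟩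
    have hg0 : 0 ≤ g := hgdef ▸ Real.sqrt_nonneg _
    have hgsq : g^2 = (1/2 - (1-a)^2)/2 := hgdef ▸ Real.sq_sqrt harga
    have hg12 : g ≤ 1/2 := le_of_sq_le_sq (by nlinarith) (by norm_num)
    have hdisj : Disjoint (Set.Ioc (0:ℝ) g) (Set.Ioc (1-g) 1) := by
      apply Set.disjoint_left.2
      rintro x ⟨_, hxg⟩ ⟨hx1, _⟩
      linarith
    have hdisj2 : Disjoint (Set.Ioc (0:ℝ) (1/2)) (Set.Ioc (1/2:ℝ) a) := by
      apply Set.disjoint_left.2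
      rintro x ⟨_, hxg⟩ ⟨hx1, _⟩
      linarith
    rw [set_high a hhalf.le ha1, ← hgdef]
    rw [setLIntegral_congr (Filter.EventuallyEq.union
        (Ioc_ae_eq_Icc (a := (0:ℝ)) (b := g)) (Ioc_ae_eq_Icc (a := 1-g) (b := 1))).symm,
      setLIntegral_congr (Ioc_ae_eq_Icc (a := (0:ℝ)) (b := a)).symm]
    rw [show Set.Ioc (0:ℝ) a = Set.Ioc 0 (1/2) ∪ Set.Ioc (1/2) a from
      (Set.Ioc_union_Ioc_eq_Ioc (by norm_num) hhalf.le).symm]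
    rw [lintegral_union measurableSet_Ioc hdisj, lintegral_union measurableSet_Ioc hdisj2]
    rw [lint_left 0 g le_rfl hg0 hg12,
      lint_right (1-g) 1 (by linarith) (by linarith) le_rfl,
      lint_left 0 (1/2) le_rfl (by norm_num) le_rfl,
      lint_right (1/2) a le_rfl hhalf.le ha1]
    rw [← ENNReal.ofReal_add (by nlinarith) (by nlinarith),
      ← ENNReal.ofReal_add (by nlinarith) (by nlinarith)]
    congr 1
    linear_combination 4 * hgsq
end
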